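/- For every positive integer n and nonnegative integer k, the number of partitions with perimeter n having exactly k repeated part sizes equals the number of partitions with perimeter n having exactly k even part sizes. -/

import Mathlib

/-- A partition: a nonempty weakly decreasing list of positive integers. -/
def IsPartition (l : List ℕ) : Prop :=
  l ≠ [] ∧ l.Pairwise (· ≥ ·) ∧ ∀ x ∈ l, 0 < x

/-- The perimeter of a partition: largest part plus number of parts minus 1. -/
def perim (l : List ℕ) : ℕ := l.headI + l.length - 1

/-- Number of repeated parts: indices i with λ_i = λ_{i+1}. -/
def repStat (l : List ℕ) : ℕ :=
  ((List.range (l.length - 1)).filter fun i => l.getD i 0 = l.getD (i + 1) 0).length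

/-- Number of even parts. -/
def evenStat (l : List ℕ) : ℕ := l.countP fun x => x % 2 = 0
/-- Number of repeated part sizes: values occurring at least twice. -/
def repSizes (l : List ℕ) : ℕ := l.dedup.countP fun v => 2 ≤ l.count v

/-- Number of even part sizes: even values occurring, without multiplicity. -/
def evenSizes (l : List ℕ) : ℕ := l.dedup.countP fun v => v % 2 = 0


-- cons lemmas
lemma count_eq_zero_iff {x : ℕ} {xs : List ℕ} : xs.count x = 0 ↔ x ∉ xs :=
  List.count_eq_zero

lemma repSizes_cons (x : ℕ) (xs : List ℕ) :
    repSizes (x :: xs) = repSizes xs + (if x ∈ xs ∧ xs.count x = 1 then 1 else 0) := by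
  unfold repSizes
  by_cases hx : x ∈ xs
  · rw [List.dedup_cons_of_mem hx]
    have hmem : x ∈ xs.dedup := List.mem_dedup.mpr hx
    have hperm := List.perm_cons_erase hmem
    rw [hperm.countP_eq, hperm.countP_eq, List.countP_cons, List.countP_cons]
    have hcongr : ∀ a ∈ xs.dedup.erase x,
        (decide (2 ≤ (x :: xs).count a) = true ↔ decide (2 ≤ xs.count a) = true) := by
      intro a ha
      have hne : a ≠ x := ((xs.nodup_dedup).mem_erase_iff.mp ha).1
      rw [List.count_cons_of_ne hne.symm]
    rw [List.countP_congr hcongr]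
    have h1 : (x :: xs).count x = xs.count x + 1 := List.count_cons_self
    have hc : 1 ≤ xs.count x := by simpa using List.count_pos_iff.mpr hx
    by_cases h2 : xs.count x = 1
    · simp [h1, h2, hx]
    · have : 2 ≤ xs.count x := by omega
      simp [h1, this, hx, h2]
  · rw [List.dedup_cons_of_notMem hx, List.countP_cons]
    have h1 : (x :: xs).count x = 1 := by
      rw [List.count_cons_self, count_eq_zero_iff.mpr hx]
    have hcongr : ∀ a ∈ xs.dedup,
        (decide (2 ≤ (x :: xs).count a) = true ↔ decide (2 ≤ xs.count a) = true) := by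
      intro a ha
      have hne : a ≠ x := by rintro rfl; exact hx (List.mem_dedup.mp ha)
      rw [List.count_cons_of_ne hne.symm]
    rw [List.countP_congr hcongr]
    simp [h1, hx]

lemma evenSizes_cons (x : ℕ) (xs : List ℕ) :
    evenSizes (x :: xs) = evenSizes xs + (if x % 2 = 0 ∧ x ∉ xs then 1 else 0) := by
  unfold evenSizes
  by_cases hx : x ∈ xs
  · rw [List.dedup_cons_of_mem hx]; simp [hx]
  · rw [List.dedup_cons_of_notMem hx, List.countP_cons]
    by_cases hp : x % 2 = 0 <;> simp [hp, hx]

-- structural defs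
def pp (n : ℕ) : Set (List ℕ) := {l | IsPartition l ∧ perim l = n}

def stepV (l : List ℕ) : List ℕ := l.headI :: l
def stepH (l : List ℕ) : List ℕ := (l.headI + 1) :: l.tail

lemma part_cons {x : ℕ} {xs : List ℕ} (h : IsPartition (x :: xs)) :
    0 < x ∧ (∀ y ∈ xs, y ≤ x) ∧ xs.Pairwise (· ≥ ·) ∧ ∀ y ∈ xs, 0 < y := by
  obtain ⟨-, hs, hp⟩ := h
  rw [List.pairwise_cons] at hs
  exact ⟨hp x (by simp), hs.1, hs.2, fun y hy => hp y (by simp [hy])⟩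

lemma exists_cons {l : List ℕ} (h : IsPartition l) : ∃ x xs, l = x :: xs := by
  obtain ⟨hne, -, -⟩ := h
  cases l with
  | nil => exact absurd rfl hne
  | cons x xs => exact ⟨x, xs, rfl⟩

lemma perim_cons {x : ℕ} (xs : List ℕ) : perim (x :: xs) = x + xs.length := by
  simp [perim]

lemma stepV_mem_pp {n : ℕ} {l : List ℕ} (h : l ∈ pp n) : stepV l ∈ pp (n + 1) := by
  obtain ⟨hp, hper⟩ := h
  obtain ⟨x, xs, rfl⟩ := exists_cons hp
  obtain ⟨hx, hle, hs, hpos⟩ := part_cons hp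
  constructor
  · refine ⟨by simp [stepV], ?_, ?_⟩
    · simp only [stepV, List.headI, List.pairwise_cons, List.mem_cons]
      refine ⟨fun b hb => ?_, hle, hs⟩
      rcases hb with rfl | h
      · omega
      · exact hle b h
    · intro y hy
      simp only [stepV, List.headI, List.mem_cons] at hy
      rcases hy with rfl | rfl | h
      · exact hx
      · exact hx
      · exact hpos y h
  · rw [perim_cons] at hper
    simp only [stepV, List.headI, perim_cons, List.length_cons]
    omega

lemma stepH_mem_pp {n : ℕ} {l : List ℕ} (h : l ∈ pp n) : stepH l ∈ pp (n + 1) := by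
  obtain ⟨hp, hper⟩ := h
  obtain ⟨x, xs, rfl⟩ := exists_cons hp
  obtain ⟨hx, hle, hs, hpos⟩ := part_cons hp
  constructor
  · refine ⟨by simp [stepH], ?_, ?_⟩
    · simp only [stepH, List.headI, List.tail_cons, List.pairwise_cons]
      exact ⟨fun b hb => by have := hle b hb; omega, hs⟩
    · intro y hy
      simp only [stepH, List.headI, List.tail_cons, List.mem_cons] at hy
      rcases hy with rfl | h
      · omega
      · exact hpos y h
  · rw [perim_cons] at hper
    simp only [stepH, List.headI, List.tail_cons, perim_cons]
    omega

-- head-count facts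
lemma headI_count_pos {l : List ℕ} (h : IsPartition l) : 1 ≤ l.count l.headI := by
  obtain ⟨x, xs, rfl⟩ := exists_cons h
  simp [List.count_cons_self]

lemma headI_mem_tail_iff {l : List ℕ} (h : IsPartition l) :
    l.headI ∈ l.tail ↔ 2 ≤ l.count l.headI := by
  obtain ⟨x, xs, rfl⟩ := exists_cons h
  simp only [List.headI, List.tail_cons, List.count_cons_self]
  constructor
  · intro hm; have := List.count_pos_iff.mpr hm; omega
  · intro h2; have : 1 ≤ xs.count x := by omega
    exact List.count_pos_iff.mp (by omega)
-- step statistics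
lemma stepV_spec {n : ℕ} {l : List ℕ} (h : l ∈ pp n) :
    (stepV l).headI = l.headI ∧
    (stepV l).count (stepV l).headI = l.count l.headI + 1 ∧
    evenSizes (stepV l) = evenSizes l ∧
    repSizes (stepV l) = repSizes l + (if l.count l.headI = 1 then 1 else 0) := by
  obtain ⟨x, xs, rfl⟩ := exists_cons h.1
  have e1 : stepV (x :: xs) = x :: x :: xs := rfl
  rw [e1]
  refine ⟨rfl, ?_, ?_, ?_⟩
  · simp [List.count_cons_self]
  · rw [evenSizes_cons x (x :: xs)]
    simp
  · rw [repSizes_cons x (x :: xs)]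
    by_cases hc : (x :: xs).count x = 1 <;> simp [hc]

lemma stepH_spec {n : ℕ} {l : List ℕ} (h : l ∈ pp n) :
    (stepH l).headI = l.headI + 1 ∧
    (stepH l).count (stepH l).headI = 1 ∧
    (evenSizes (stepH l) + (if l.headI % 2 = 0 ∧ ¬ 2 ≤ l.count l.headI then 1 else 0)
      = evenSizes l + (if (l.headI + 1) % 2 = 0 then 1 else 0)) ∧
    (repSizes (stepH l) + (if l.count l.headI = 2 then 1 else 0) = repSizes l) := by
  obtain ⟨hp, hper⟩ := h
  obtain ⟨x, xs, rfl⟩ := exists_cons hp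
  obtain ⟨hx, hle, hs, hpos⟩ := part_cons hp
  have hnm : (x + 1) ∉ xs := fun hc => by have := hle _ hc; omega
  have e1 : stepH (x :: xs) = (x + 1) :: xs := rfl
  rw [e1]
  have hcnt : (x :: xs).count x = xs.count x + 1 := List.count_cons_self
  refine ⟨rfl, ?_, ?_, ?_⟩
  · simp only [List.headI]
    rw [List.count_cons_self, count_eq_zero_iff.mpr hnm]
  · rw [evenSizes_cons (x+1) xs, evenSizes_cons x xs]
    by_cases hm : x ∈ xs
    · have h2 : 2 ≤ (x :: xs).count x := by
        have := List.count_pos_iff.mpr hm; omega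
      simp [hnm, hm, h2]
      exact if_congr Iff.rfl rfl rfl
    · have h2 : ¬ 2 ≤ (x :: xs).count x := by
        rw [hcnt, count_eq_zero_iff.mpr hm]; omega
      by_cases hpar : x % 2 = 0
      · have hp1 : ¬ (x + 1) % 2 = 0 := by omega
        simp [hnm, hm, h2, hpar, hp1]
      · have hp1 : (x + 1) % 2 = 0 := by omega
        simp [hnm, hm, h2, hpar, hp1]
  · rw [repSizes_cons (x+1) xs, repSizes_cons x xs]
    by_cases hm : x ∈ xs
    · have h1 : 1 ≤ xs.count x := List.count_pos_iff.mpr hm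
      by_cases h2 : xs.count x = 1
      · simp [hnm, hm, h2, hcnt]
      · have h3 : ¬ (x :: xs).count x = 2 := by omega
        simp [hnm, hm, h2, h3]
    · have h0 : xs.count x = 0 := count_eq_zero_iff.mpr hm
      have h3 : ¬ (x :: xs).count x = 2 := by omega
      simp [hnm, hm, h3, h0]

lemma stepV_inj : Function.Injective stepV := by
  intro l l' h
  simpa [stepV] using congrArg List.tail h

lemma stepH_injOn {n : ℕ} : Set.InjOn stepH (pp n) := by
  intro l hl l' hl' h
  obtain ⟨x, xs, rfl⟩ := exists_cons hl.1
  obtain ⟨y, ys, rfl⟩ := exists_cons hl'.1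
  simp only [stepH, List.headI, List.tail_cons, List.cons.injEq] at h
  obtain ⟨h1, h2⟩ := h
  rw [show x = y by omega, h2]

lemma pp_succ_inv {n : ℕ} (hn : 1 ≤ n) {l' : List ℕ} (h : l' ∈ pp (n + 1)) :
    (2 ≤ l'.count l'.headI ∧ ∃ l ∈ pp n, stepV l = l') ∨
    (l'.count l'.headI = 1 ∧ ∃ l ∈ pp n, stepH l = l') := by
  obtain ⟨hp, hper⟩ := h
  obtain ⟨y, ys, rfl⟩ := exists_cons hp
  obtain ⟨hy, hle, hs, hpos⟩ := part_cons hp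
  rw [perim_cons] at hper
  by_cases hm : y ∈ ys
  · left
    obtain ⟨z, zs, rfl⟩ :=
      List.exists_cons_of_ne_nil (show ys ≠ [] from by rintro rfl; simp at hm)
    have hz : z = y := by
      have h1 : z ≤ y := hle z (by simp)
      rcases List.mem_cons.mp hm with h2 | h2
      · omega
      · have := (List.pairwise_cons.mp hs).1 y h2; omega
    subst hz
    constructor
    · simp only [List.headI]
      rw [List.count_cons_self, List.count_cons_self]
      omega
    · refine ⟨z :: zs, ⟨⟨by simp, hs, fun w hw => hpos w hw⟩, ?_⟩, rfl⟩
      rw [perim_cons]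
      simp only [List.length_cons] at hper
      omega
  · right
    have hy2 : 2 ≤ y := by
      cases ys with
      | nil =>
        simp only [List.length_nil] at hper
        omega
      | cons z zs =>
        have h1 : z ≤ y := hle z (by simp)
        have h2 : z ≠ y := by rintro rfl; simp at hm
        have h3 : 0 < z := hpos z (by simp)
        omega
    have hcnt : (y :: ys).count y = 1 := by
      rw [List.count_cons_self, count_eq_zero_iff.mpr hm]
    constructor
    · simpa only [List.headI] using hcnt
    · refine ⟨(y - 1) :: ys, ⟨⟨by simp, ?_, ?_⟩, ?_⟩, ?_⟩
      · rw [List.pairwise_cons]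
        refine ⟨fun b hb => ?_, hs⟩
        have h1 : b ≤ y := hle b hb
        have h2 : b ≠ y := by rintro rfl; exact hm hb
        omega
      · intro z hz
        rcases List.mem_cons.mp hz with rfl | hzz
        · omega
        · exact hpos z hzz
      · rw [perim_cons]; omega
      · simp only [stepH, List.headI, List.tail_cons]
        congr 1
        omega
-- state sets
def A1 (n k : ℕ) : Set (List ℕ) := {l | l ∈ pp n ∧ repSizes l = k ∧ l.count l.headI = 1}
def A2 (n k : ℕ) : Set (List ℕ) := {l | l ∈ pp n ∧ repSizes l = k ∧ l.count l.headI = 2}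
def A3 (n k : ℕ) : Set (List ℕ) := {l | l ∈ pp n ∧ repSizes l = k ∧ 3 ≤ l.count l.headI}
def BFF (n k : ℕ) : Set (List ℕ) :=
  {l | l ∈ pp n ∧ evenSizes l = k ∧ l.headI % 2 = 1 ∧ l.count l.headI = 1}
def BFT (n k : ℕ) : Set (List ℕ) :=
  {l | l ∈ pp n ∧ evenSizes l = k ∧ l.headI % 2 = 1 ∧ 2 ≤ l.count l.headI}
def BTF (n k : ℕ) : Set (List ℕ) :=
  {l | l ∈ pp n ∧ evenSizes l = k ∧ l.headI % 2 = 0 ∧ l.count l.headI = 1}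
def BTT (n k : ℕ) : Set (List ℕ) :=
  {l | l ∈ pp n ∧ evenSizes l = k ∧ l.headI % 2 = 0 ∧ 2 ≤ l.count l.headI}

lemma pp_zero : pp 0 = ∅ := by
  ext l
  simp only [Set.mem_empty_iff_false, iff_false]
  rintro ⟨hp, hper⟩
  obtain ⟨x, xs, rfl⟩ := exists_cons hp
  obtain ⟨hx, -, -, -⟩ := part_cons hp
  rw [perim_cons] at hper
  omega

lemma pp_one : pp 1 = {[1]} := by
  ext l
  constructor
  · rintro ⟨hp, hper⟩
    obtain ⟨x, xs, rfl⟩ := exists_cons hp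
    obtain ⟨hx, -, -, -⟩ := part_cons hp
    rw [perim_cons] at hper
    have hx1 : x = 1 := by omega
    have hxs : xs = [] := List.length_eq_zero_iff.mp (by omega)
    simp [hx1, hxs]
  · rintro rfl
    exact ⟨⟨by simp, by simp, by simp⟩, by simp [perim]⟩

lemma pp_finite : ∀ n, (pp n).Finite := by
  intro n
  induction n with
  | zero => rw [pp_zero]; exact Set.finite_empty
  | succ n ih =>
    rcases Nat.eq_zero_or_pos n with rfl | hn
    · rw [pp_one]; exact Set.finite_singleton _
    · have hsub : pp (n + 1) ⊆ stepV '' pp n ∪ stepH '' pp n := by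
        intro l' hl'
        rcases pp_succ_inv hn hl' with ⟨-, l, hl, rfl⟩ | ⟨-, l, hl, rfl⟩
        · exact Or.inl ⟨l, hl, rfl⟩
        · exact Or.inr ⟨l, hl, rfl⟩
      exact ((ih.image stepV).union (ih.image stepH)).subset hsub

lemma repSizes_one : repSizes [1] = 0 := rfl
lemma evenSizes_one : evenSizes [1] = 0 := rfl

-- emptiness lemmas
lemma A2_zero (n : ℕ) : A2 n 0 = ∅ := by
  ext l
  simp only [Set.mem_empty_iff_false, iff_false]
  rintro ⟨⟨hp, -⟩, hrep, hcnt⟩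
  obtain ⟨x, xs, rfl⟩ := exists_cons hp
  have hmem : (x :: xs).headI ∈ (x :: xs).dedup := List.mem_dedup.mpr (by simp [List.headI])
  have : 0 < repSizes (x :: xs) :=
    List.countP_pos_iff.mpr ⟨_, hmem, by simp only [decide_eq_true_eq]; omega⟩
  omega

lemma evenSizes_pos {n : ℕ} {l : List ℕ} (hl : l ∈ pp n) (hpar : l.headI % 2 = 0) :
    0 < evenSizes l := by
  obtain ⟨x, xs, rfl⟩ := exists_cons hl.1
  have hmem : (x :: xs).headI ∈ (x :: xs).dedup := List.mem_dedup.mpr (by simp [List.headI])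
  exact List.countP_pos_iff.mpr ⟨_, hmem, by simp only [decide_eq_true_eq]; exact hpar⟩

lemma BTF_zero (n : ℕ) : BTF n 0 = ∅ := by
  ext l
  simp only [Set.mem_empty_iff_false, iff_false]
  rintro ⟨hpp, heven, hpar, -⟩
  have := evenSizes_pos hpp hpar
  omega

lemma BTT_zero (n : ℕ) : BTT n 0 = ∅ := by
  ext l
  simp only [Set.mem_empty_iff_false, iff_false]
  rintro ⟨hpp, heven, hpar, -⟩
  have := evenSizes_pos hpp hpar
  omega
-- recurrence set equalities
lemma R1 {n : ℕ} (hn : 1 ≤ n) (k : ℕ) :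
    BFT (n + 1) k = stepV '' (BFF n k ∪ BFT n k) := by
  ext l'
  constructor
  · rintro ⟨hpp', hE, hpar, hcnt⟩
    rcases pp_succ_inv hn hpp' with ⟨-, l, hl, rfl⟩ | ⟨h1, l, hl, rfl⟩
    · obtain ⟨hhead, hcnt', hE', hR'⟩ := stepV_spec hl
      refine ⟨l, ?_, rfl⟩
      rw [hhead] at hpar
      rw [hE'] at hE
      have hc1 : 1 ≤ l.count l.headI := headI_count_pos hl.1
      rcases Nat.lt_or_ge (l.count l.headI) 2 with hc | hc
      · exact Or.inl ⟨hl, hE, hpar, by omega⟩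
      · exact Or.inr ⟨hl, hE, hpar, hc⟩
    · omega
  · rintro ⟨l, hl, rfl⟩
    have hlpp : l ∈ pp n := by rcases hl with ⟨h, -⟩ | ⟨h, -⟩ <;> exact h
    obtain ⟨hhead, hcnt', hE', hR'⟩ := stepV_spec hlpp
    have hc1 : 1 ≤ l.count l.headI := headI_count_pos hlpp.1
    refine ⟨stepV_mem_pp hlpp, ?_, ?_, ?_⟩
    · rw [hE']
      rcases hl with ⟨-, h, -⟩ | ⟨-, h, -⟩ <;> exact h
    · rw [hhead]
      rcases hl with ⟨-, -, h, -⟩ | ⟨-, -, h, -⟩ <;> exact h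
    · rw [hcnt']
      omega

lemma R2 {n : ℕ} (hn : 1 ≤ n) (k : ℕ) :
    BTT (n + 1) k = stepV '' (BTF n k ∪ BTT n k) := by
  ext l'
  constructor
  · rintro ⟨hpp', hE, hpar, hcnt⟩
    rcases pp_succ_inv hn hpp' with ⟨-, l, hl, rfl⟩ | ⟨h1, l, hl, rfl⟩
    · obtain ⟨hhead, hcnt', hE', hR'⟩ := stepV_spec hl
      refine ⟨l, ?_, rfl⟩
      rw [hhead] at hpar
      rw [hE'] at hE
      have hc1 : 1 ≤ l.count l.headI := headI_count_pos hl.1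
      rcases Nat.lt_or_ge (l.count l.headI) 2 with hc | hc
      · exact Or.inl ⟨hl, hE, hpar, by omega⟩
      · exact Or.inr ⟨hl, hE, hpar, hc⟩
    · omega
  · rintro ⟨l, hl, rfl⟩
    have hlpp : l ∈ pp n := by rcases hl with ⟨h, -⟩ | ⟨h, -⟩ <;> exact h
    obtain ⟨hhead, hcnt', hE', hR'⟩ := stepV_spec hlpp
    have hc1 : 1 ≤ l.count l.headI := headI_count_pos hlpp.1
    refine ⟨stepV_mem_pp hlpp, ?_, ?_, ?_⟩
    · rw [hE']
      rcases hl with ⟨-, h, -⟩ | ⟨-, h, -⟩ <;> exact h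
    · rw [hhead]
      rcases hl with ⟨-, -, h, -⟩ | ⟨-, -, h, -⟩ <;> exact h
    · rw [hcnt']
      omega

lemma R3 {n : ℕ} (hn : 1 ≤ n) (k : ℕ) :
    BTF (n + 1) (k + 1) = stepH '' (BFF n k ∪ BFT n k) := by
  ext l'
  constructor
  · rintro ⟨hpp', hE, hpar, hcnt⟩
    rcases pp_succ_inv hn hpp' with ⟨h2, l, hl, rfl⟩ | ⟨h1, l, hl, rfl⟩
    · omega
    · obtain ⟨hhead, hcnt', hE', hR'⟩ := stepH_spec hl
      refine ⟨l, ?_, rfl⟩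
      rw [hhead] at hpar
      have hlpar : l.headI % 2 = 1 := by omega
      have hc1 : 1 ≤ l.count l.headI := headI_count_pos hl.1
      rw [hE] at hE'
      rcases Nat.lt_or_ge (l.count l.headI) 2 with hc | hc
      · refine Or.inl ⟨hl, ?_, hlpar, by omega⟩
        split_ifs at hE' <;> omega
      · refine Or.inr ⟨hl, ?_, hlpar, hc⟩
        split_ifs at hE' <;> omega
  · rintro ⟨l, hl, rfl⟩
    have hlpp : l ∈ pp n := by rcases hl with ⟨h, -⟩ | ⟨h, -⟩ <;> exact h
    have hlpar : l.headI % 2 = 1 := by rcases hl with ⟨-, -, h, -⟩ | ⟨-, -, h, -⟩ <;> exact h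
    have hlE : evenSizes l = k := by rcases hl with ⟨-, h, -⟩ | ⟨-, h, -⟩ <;> exact h
    obtain ⟨hhead, hcnt', hE', hR'⟩ := stepH_spec hlpp
    refine ⟨stepH_mem_pp hlpp, ?_, by omega, hcnt'⟩
    split_ifs at hE' <;> omega

lemma R4 {n : ℕ} (hn : 1 ≤ n) (k : ℕ) :
    BFF (n + 1) k = stepH '' (BTF n (k + 1) ∪ BTT n k) := by
  ext l'
  constructor
  · rintro ⟨hpp', hE, hpar, hcnt⟩
    rcases pp_succ_inv hn hpp' with ⟨h2, l, hl, rfl⟩ | ⟨h1, l, hl, rfl⟩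
    · omega
    · obtain ⟨hhead, hcnt', hE', hR'⟩ := stepH_spec hl
      refine ⟨l, ?_, rfl⟩
      rw [hhead] at hpar
      have hlpar : l.headI % 2 = 0 := by omega
      have hc1 : 1 ≤ l.count l.headI := headI_count_pos hl.1
      rw [hE] at hE'
      rcases Nat.lt_or_ge (l.count l.headI) 2 with hc | hc
      · refine Or.inl ⟨hl, ?_, hlpar, by omega⟩
        split_ifs at hE' <;> omega
      · refine Or.inr ⟨hl, ?_, hlpar, hc⟩
        split_ifs at hE' <;> omega
  · rintro ⟨l, hl, rfl⟩
    have hlpp : l ∈ pp n := by rcases hl with ⟨h, -⟩ | ⟨h, -⟩ <;> exact h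
    have hlpar : l.headI % 2 = 0 := by rcases hl with ⟨-, -, h, -⟩ | ⟨-, -, h, -⟩ <;> exact h
    obtain ⟨hhead, hcnt', hE', hR'⟩ := stepH_spec hlpp
    refine ⟨stepH_mem_pp hlpp, ?_, by omega, hcnt'⟩
    rcases hl with ⟨-, hE, -, hc⟩ | ⟨-, hE, -, hc⟩ <;>
      · split_ifs at hE' <;> omega

lemma R5 {n : ℕ} (hn : 1 ≤ n) (k : ℕ) :
    A2 (n + 1) (k + 1) = stepV '' (A1 n k) := by
  ext l'
  constructor
  · rintro ⟨hpp', hR, hcnt⟩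
    rcases pp_succ_inv hn hpp' with ⟨-, l, hl, rfl⟩ | ⟨h1, l, hl, rfl⟩
    · obtain ⟨hhead, hcnt', hE', hR'⟩ := stepV_spec hl
      refine ⟨l, ⟨hl, ?_, ?_⟩, rfl⟩
      · split_ifs at hR' <;> omega
      · omega
    · omega
  · rintro ⟨l, ⟨hlpp, hR, hc⟩, rfl⟩
    obtain ⟨hhead, hcnt', hE', hR'⟩ := stepV_spec hlpp
    refine ⟨stepV_mem_pp hlpp, ?_, by omega⟩
    split_ifs at hR' <;> omega

lemma R6 {n : ℕ} (hn : 1 ≤ n) (k : ℕ) :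
    A3 (n + 1) k = stepV '' (A2 n k ∪ A3 n k) := by
  ext l'
  constructor
  · rintro ⟨hpp', hR, hcnt⟩
    rcases pp_succ_inv hn hpp' with ⟨-, l, hl, rfl⟩ | ⟨h1, l, hl, rfl⟩
    · obtain ⟨hhead, hcnt', hE', hR'⟩ := stepV_spec hl
      refine ⟨l, ?_, rfl⟩
      have hc2 : 2 ≤ l.count l.headI := by omega
      have hRl : repSizes l = k := by split_ifs at hR' <;> omega
      rcases Nat.lt_or_ge (l.count l.headI) 3 with hc | hc
      · exact Or.inl ⟨hl, hRl, by omega⟩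
      · exact Or.inr ⟨hl, hRl, by omega⟩
    · omega
  · rintro ⟨l, hl, rfl⟩
    have hlpp : l ∈ pp n := by rcases hl with ⟨h, -⟩ | ⟨h, -⟩ <;> exact h
    have hc2 : 2 ≤ l.count l.headI := by
      rcases hl with ⟨-, -, h⟩ | ⟨-, -, h⟩ <;> omega
    have hRl : repSizes l = k := by rcases hl with ⟨-, h, -⟩ | ⟨-, h, -⟩ <;> exact h
    obtain ⟨hhead, hcnt', hE', hR'⟩ := stepV_spec hlpp
    refine ⟨stepV_mem_pp hlpp, ?_, by omega⟩
    split_ifs at hR' <;> omega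

lemma R7 {n : ℕ} (hn : 1 ≤ n) (k : ℕ) :
    A1 (n + 1) k = stepH '' (A1 n k ∪ A2 n (k + 1) ∪ A3 n k) := by
  ext l'
  constructor
  · rintro ⟨hpp', hR, hcnt⟩
    rcases pp_succ_inv hn hpp' with ⟨h2, l, hl, rfl⟩ | ⟨h1, l, hl, rfl⟩
    · omega
    · obtain ⟨hhead, hcnt', hE', hR'⟩ := stepH_spec hl
      refine ⟨l, ?_, rfl⟩
      have hc1 : 1 ≤ l.count l.headI := headI_count_pos hl.1
      rcases Nat.lt_or_ge (l.count l.headI) 2 with hc | hc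
      · refine Or.inl (Or.inl ⟨hl, ?_, by omega⟩)
        split_ifs at hR' <;> omega
      · rcases Nat.lt_or_ge (l.count l.headI) 3 with hc3 | hc3
        · refine Or.inl (Or.inr ⟨hl, ?_, by omega⟩)
          split_ifs at hR' <;> omega
        · refine Or.inr ⟨hl, ?_, hc3⟩
          split_ifs at hR' <;> omega
  · rintro ⟨l, hl, rfl⟩
    have hlpp : l ∈ pp n := by
      rcases hl with (⟨h, -⟩ | ⟨h, -⟩) | ⟨h, -⟩ <;> exact h
    obtain ⟨hhead, hcnt', hE', hR'⟩ := stepH_spec hlpp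
    refine ⟨stepH_mem_pp hlpp, ?_, hcnt'⟩
    rcases hl with (⟨-, hR, hc⟩ | ⟨-, hR, hc⟩) | ⟨-, hR, hc⟩ <;>
      · split_ifs at hR' <;> omega
-- finiteness of state sets
lemma finite_sub {n : ℕ} {S : Set (List ℕ)} (h : S ⊆ pp n) : S.Finite :=
  (pp_finite n).subset h

lemma A1_sub {n k} : A1 n k ⊆ pp n := fun _ h => h.1
lemma A2_sub {n k} : A2 n k ⊆ pp n := fun _ h => h.1
lemma A3_sub {n k} : A3 n k ⊆ pp n := fun _ h => h.1
lemma BFF_sub {n k} : BFF n k ⊆ pp n := fun _ h => h.1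
lemma BFT_sub {n k} : BFT n k ⊆ pp n := fun _ h => h.1
lemma BTF_sub {n k} : BTF n k ⊆ pp n := fun _ h => h.1
lemma BTT_sub {n k} : BTT n k ⊆ pp n := fun _ h => h.1

-- disjointness
lemma d_A1_A2 {n k k'} : Disjoint (A1 n k) (A2 n k') :=
  Set.disjoint_left.mpr fun l h1 h2 => by obtain ⟨-, -, c1⟩ := h1; obtain ⟨-, -, c2⟩ := h2; omega
lemma d_A1_A3 {n k k'} : Disjoint (A1 n k) (A3 n k') :=
  Set.disjoint_left.mpr fun l h1 h2 => by obtain ⟨-, -, c1⟩ := h1; obtain ⟨-, -, c2⟩ := h2; omega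
lemma d_A2_A3 {n k k'} : Disjoint (A2 n k) (A3 n k') :=
  Set.disjoint_left.mpr fun l h1 h2 => by obtain ⟨-, -, c1⟩ := h1; obtain ⟨-, -, c2⟩ := h2; omega
lemma d_FF_FT {n k k'} : Disjoint (BFF n k) (BFT n k') :=
  Set.disjoint_left.mpr fun l h1 h2 => by
    obtain ⟨-, -, -, c1⟩ := h1; obtain ⟨-, -, -, c2⟩ := h2; omega
lemma d_TF_TT {n k k'} : Disjoint (BTF n k) (BTT n k') :=
  Set.disjoint_left.mpr fun l h1 h2 => by
    obtain ⟨-, -, -, c1⟩ := h1; obtain ⟨-, -, -, c2⟩ := h2; omega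
lemma d_FF_TF {n k k'} : Disjoint (BFF n k) (BTF n k') :=
  Set.disjoint_left.mpr fun l h1 h2 => by
    obtain ⟨-, -, p1, -⟩ := h1; obtain ⟨-, -, p2, -⟩ := h2; omega
lemma d_FF_TT {n k k'} : Disjoint (BFF n k) (BTT n k') :=
  Set.disjoint_left.mpr fun l h1 h2 => by
    obtain ⟨-, -, p1, -⟩ := h1; obtain ⟨-, -, p2, -⟩ := h2; omega
lemma d_FT_TF {n k k'} : Disjoint (BFT n k) (BTF n k') :=
  Set.disjoint_left.mpr fun l h1 h2 => by
    obtain ⟨-, -, p1, -⟩ := h1; obtain ⟨-, -, p2, -⟩ := h2; omega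
lemma d_FT_TT {n k k'} : Disjoint (BFT n k) (BTT n k') :=
  Set.disjoint_left.mpr fun l h1 h2 => by
    obtain ⟨-, -, p1, -⟩ := h1; obtain ⟨-, -, p2, -⟩ := h2; omega

-- card recurrences
lemma cR1 {n : ℕ} (hn : 1 ≤ n) (k : ℕ) :
    (BFT (n + 1) k).ncard = (BFF n k).ncard + (BFT n k).ncard := by
  rw [R1 hn k, Set.ncard_image_of_injOn (stepV_inj.injOn),
    Set.ncard_union_eq d_FF_FT (finite_sub BFF_sub) (finite_sub BFT_sub)]

lemma cR2 {n : ℕ} (hn : 1 ≤ n) (k : ℕ) :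
    (BTT (n + 1) k).ncard = (BTF n k).ncard + (BTT n k).ncard := by
  rw [R2 hn k, Set.ncard_image_of_injOn (stepV_inj.injOn),
    Set.ncard_union_eq d_TF_TT (finite_sub BTF_sub) (finite_sub BTT_sub)]

lemma cR3 {n : ℕ} (hn : 1 ≤ n) (k : ℕ) :
    (BTF (n + 1) (k + 1)).ncard = (BFF n k).ncard + (BFT n k).ncard := by
  rw [R3 hn k, Set.ncard_image_of_injOn (stepH_injOn.mono (Set.union_subset BFF_sub BFT_sub)),
    Set.ncard_union_eq d_FF_FT (finite_sub BFF_sub) (finite_sub BFT_sub)]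

lemma cR4 {n : ℕ} (hn : 1 ≤ n) (k : ℕ) :
    (BFF (n + 1) k).ncard = (BTF n (k + 1)).ncard + (BTT n k).ncard := by
  rw [R4 hn k, Set.ncard_image_of_injOn (stepH_injOn.mono (Set.union_subset BTF_sub BTT_sub)),
    Set.ncard_union_eq d_TF_TT (finite_sub BTF_sub) (finite_sub BTT_sub)]

lemma cR5 {n : ℕ} (hn : 1 ≤ n) (k : ℕ) :
    (A2 (n + 1) (k + 1)).ncard = (A1 n k).ncard := by
  rw [R5 hn k, Set.ncard_image_of_injOn (stepV_inj.injOn)]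

lemma cR6 {n : ℕ} (hn : 1 ≤ n) (k : ℕ) :
    (A3 (n + 1) k).ncard = (A2 n k).ncard + (A3 n k).ncard := by
  rw [R6 hn k, Set.ncard_image_of_injOn (stepV_inj.injOn),
    Set.ncard_union_eq d_A2_A3 (finite_sub A2_sub) (finite_sub A3_sub)]

lemma cR7 {n : ℕ} (hn : 1 ≤ n) (k : ℕ) :
    (A1 (n + 1) k).ncard = (A1 n k).ncard + (A2 n (k + 1)).ncard + (A3 n k).ncard := by
  rw [R7 hn k,
    Set.ncard_image_of_injOn
      (stepH_injOn.mono (Set.union_subset (Set.union_subset A1_sub A2_sub) A3_sub)),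
    Set.ncard_union_eq (Disjoint.union_left d_A1_A3 d_A2_A3)
      ((finite_sub A1_sub).union (finite_sub A2_sub)) (finite_sub A3_sub),
    Set.ncard_union_eq d_A1_A2 (finite_sub A1_sub) (finite_sub A2_sub)]

-- base case evaluations at n = 1
lemma one_count : List.count 1 [1] = 1 := rfl
lemma one_mem_pp : [1] ∈ pp 1 := by rw [pp_one]; rfl

lemma A1_one (k : ℕ) : (A1 1 k).ncard = if k = 0 then 1 else 0 := by
  rcases Nat.eq_zero_or_pos k with rfl | hk
  · have : A1 1 0 = {[1]} := by
      ext l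
      constructor
      · rintro ⟨hpp, -, -⟩
        rw [pp_one] at hpp
        exact hpp
      · rintro rfl
        exact ⟨one_mem_pp, rfl, rfl⟩
    rw [this]
    simp
  · have : A1 1 k = ∅ := by
      ext l
      simp only [Set.mem_empty_iff_false, iff_false]
      rintro ⟨hpp, hR, -⟩
      rw [pp_one] at hpp
      rw [hpp] at hR
      rw [repSizes_one] at hR
      omega
    rw [this, Set.ncard_empty, if_neg (by omega)]

lemma BFF_one (k : ℕ) : (BFF 1 k).ncard = if k = 0 then 1 else 0 := by
  rcases Nat.eq_zero_or_pos k with rfl | hk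
  · have : BFF 1 0 = {[1]} := by
      ext l
      constructor
      · rintro ⟨hpp, -, -, -⟩
        rw [pp_one] at hpp
        exact hpp
      · rintro rfl
        exact ⟨one_mem_pp, rfl, rfl, rfl⟩
    rw [this]
    simp
  · have : BFF 1 k = ∅ := by
      ext l
      simp only [Set.mem_empty_iff_false, iff_false]
      rintro ⟨hpp, hE, -, -⟩
      rw [pp_one] at hpp
      rw [hpp] at hE
      rw [evenSizes_one] at hE
      omega
    rw [this, Set.ncard_empty, if_neg (by omega)]

lemma A2_one (k : ℕ) : (A2 1 k).ncard = 0 := by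
  have : A2 1 k = ∅ := by
    ext l
    simp only [Set.mem_empty_iff_false, iff_false]
    rintro ⟨hpp, -, hc⟩
    rw [pp_one] at hpp
    rw [hpp] at hc
    rw [show ([1] : List ℕ).headI = 1 from rfl, one_count] at hc
    omega
  simp [this]

lemma A3_one (k : ℕ) : (A3 1 k).ncard = 0 := by
  have : A3 1 k = ∅ := by
    ext l
    simp only [Set.mem_empty_iff_false, iff_false]
    rintro ⟨hpp, -, hc⟩
    rw [pp_one] at hpp
    rw [hpp] at hc
    rw [show ([1] : List ℕ).headI = 1 from rfl, one_count] at hc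
    omega
  simp [this]

lemma BFT_one (k : ℕ) : (BFT 1 k).ncard = 0 := by
  have : BFT 1 k = ∅ := by
    ext l
    simp only [Set.mem_empty_iff_false, iff_false]
    rintro ⟨hpp, -, -, hc⟩
    rw [pp_one] at hpp
    rw [hpp] at hc
    rw [show ([1] : List ℕ).headI = 1 from rfl, one_count] at hc
    omega
  simp [this]

lemma BTF_one (k : ℕ) : (BTF 1 k).ncard = 0 := by
  have : BTF 1 k = ∅ := by
    ext l
    simp only [Set.mem_empty_iff_false, iff_false]
    rintro ⟨hpp, -, hp, -⟩
    rw [pp_one] at hpp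
    rw [hpp] at hp
    simp at hp
  simp [this]

lemma BTT_one (k : ℕ) : (BTT 1 k).ncard = 0 := by
  have : BTT 1 k = ∅ := by
    ext l
    simp only [Set.mem_empty_iff_false, iff_false]
    rintro ⟨hpp, -, hp, -⟩
    rw [pp_one] at hpp
    rw [hpp] at hp
    simp at hp
  simp [this]
lemma invariants : ∀ n, 1 ≤ n → ∀ k,
    (A1 n k).ncard = (BFF n k).ncard + (BFT n k).ncard ∧
    (A2 n (k + 1)).ncard = (BFT n k).ncard ∧
    (A3 n k).ncard = (BTT n k).ncard ∧
    (BTF n (k + 1)).ncard = (BFT n k).ncard := by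
  intro n hn
  induction n, hn using Nat.le_induction with
  | base =>
    intro k
    rw [A1_one, BFF_one, BFT_one, A2_one, A3_one, BTF_one, BTT_one]
    omega
  | succ n hn ih =>
    intro k
    have h1 := (ih k).1
    have h2 := (ih k).2.1
    have h3 := (ih k).2.2.1
    have h4 := (ih k).2.2.2
    refine ⟨?_, ?_, ?_, ?_⟩
    · rw [cR7 hn k, cR4 hn k, cR1 hn k, h1, h2, h3, h4]
      omega
    · rw [cR5 hn k, cR1 hn k, h1]
    · rw [cR6 hn k, cR2 hn k, h3]
      rcases k with _ | k'
      · rw [A2_zero, BTF_zero]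
      · rw [(ih k').2.1, (ih k').2.2.2]
    · rw [cR3 hn k, cR1 hn k]

lemma repSet_eq (n k : ℕ) :
    {l : List ℕ | IsPartition l ∧ perim l = n ∧ repSizes l = k} =
      A1 n k ∪ A2 n k ∪ A3 n k := by
  ext l
  constructor
  · rintro ⟨hp, hper, hR⟩
    have hpp : l ∈ pp n := ⟨hp, hper⟩
    have hc := headI_count_pos hp
    rcases Nat.lt_or_ge (l.count l.headI) 2 with h | h
    · exact Or.inl (Or.inl ⟨hpp, hR, by omega⟩)
    · rcases Nat.lt_or_ge (l.count l.headI) 3 with h3 | h3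
      · exact Or.inl (Or.inr ⟨hpp, hR, by omega⟩)
      · exact Or.inr ⟨hpp, hR, h3⟩
  · rintro ((⟨⟨hp, hper⟩, hR, -⟩ | ⟨⟨hp, hper⟩, hR, -⟩) | ⟨⟨hp, hper⟩, hR, -⟩) <;>
      exact ⟨hp, hper, hR⟩

lemma evenSet_eq (n k : ℕ) :
    {l : List ℕ | IsPartition l ∧ perim l = n ∧ evenSizes l = k} =
      BFF n k ∪ BFT n k ∪ BTF n k ∪ BTT n k := by
  ext l
  constructor
  · rintro ⟨hp, hper, hE⟩
    have hpp : l ∈ pp n := ⟨hp, hper⟩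
    have hc := headI_count_pos hp
    rcases Nat.lt_or_ge (l.count l.headI) 2 with h | h
    · rcases Nat.mod_two_eq_zero_or_one l.headI with hpar | hpar
      · exact Or.inl (Or.inr ⟨hpp, hE, by omega, by omega⟩)
      · refine Or.inl (Or.inl (Or.inl ⟨hpp, hE, ?_, by omega⟩))
        omega
    · rcases Nat.mod_two_eq_zero_or_one l.headI with hpar | hpar
      · exact Or.inr ⟨hpp, hE, by omega, h⟩
      · exact Or.inl (Or.inl (Or.inr ⟨hpp, hE, by omega, h⟩))
  · rintro (((⟨⟨hp, hper⟩, hE, -⟩ | ⟨⟨hp, hper⟩, hE, -⟩) | ⟨⟨hp, hper⟩, hE, -⟩) |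
      ⟨⟨hp, hper⟩, hE, -⟩) <;> exact ⟨hp, hper, hE⟩

theorem repSizes_eq_evenSizes (n k : ℕ) (hn : 1 ≤ n) :
    {l : List ℕ | IsPartition l ∧ perim l = n ∧ repSizes l = k}.ncard =
    {l : List ℕ | IsPartition l ∧ perim l = n ∧ evenSizes l = k}.ncard := by
  rw [repSet_eq, evenSet_eq]
  rw [Set.ncard_union_eq (Disjoint.union_left d_A1_A3 d_A2_A3)
      ((finite_sub A1_sub).union (finite_sub A2_sub)) (finite_sub A3_sub),
    Set.ncard_union_eq d_A1_A2 (finite_sub A1_sub) (finite_sub A2_sub)]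
  rw [Set.ncard_union_eq
      (Disjoint.union_left (Disjoint.union_left d_FF_TT d_FT_TT) d_TF_TT)
      (((finite_sub BFF_sub).union (finite_sub BFT_sub)).union (finite_sub BTF_sub))
      (finite_sub BTT_sub),
    Set.ncard_union_eq (Disjoint.union_left d_FF_TF d_FT_TF)
      ((finite_sub BFF_sub).union (finite_sub BFT_sub)) (finite_sub BTF_sub),
    Set.ncard_union_eq d_FF_FT (finite_sub BFF_sub) (finite_sub BFT_sub)]
  obtain ⟨h1, -, h3, -⟩ := invariants n hn k
  rcases k with _ | k'
  · rw [A2_zero, BTF_zero]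
    simp only [Set.ncard_empty]
    omega
  · obtain ⟨-, h2, -, h4⟩ := invariants n hn k'
    omega
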